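/- Let T be a tree on vertex set {1,…,n} with edges e_i = (u_i, v_i). Suppose M is an n×n matrix with prescribed values M_{i,i} = a_i, M_{u_i,v_i} = b_i, M_{v_i,u_i} = c_i for each edge e_i, and satisfying the condition M_{u_i,w} = M_{v_i,w} for every edge e_i and every w ∉ {u_i, v_i}. Then M is uniquely determined by these constraints: M_{x,z} for (x,z) not a diagonal entry or an edge of T equals the weight assigned to the last edge of the unique path in T from x to z. -/

import Mathlib

lemma walk_entry_eq {n : ℕ} {K : Type*} [Field K]
    {T : SimpleGraph (Fin n)} (M : Matrix (Fin n) (Fin n) K)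
    (hM : ∀ u v, T.Adj u v → ∀ w, w ≠ u → w ≠ v → M u w = M v w) :
    ∀ {x z : Fin n} (p : T.Walk x z), p.IsPath → x ≠ z →
      M x z = M (p.getVert (p.length - 1)) z := by
  intro x z p
  induction p with
  | nil => intro _ h; exact absurd rfl h
  | @cons a b c hab q ih =>
    intro hp hxz
    rw [SimpleGraph.Walk.cons_isPath_iff] at hp
    obtain ⟨hq, hns⟩ := hp
    by_cases hbz : b = c
    · subst hbz
      have hq0 : q = SimpleGraph.Walk.nil := SimpleGraph.Walk.isPath_iff_eq_nil.mp hq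
      subst hq0
      simp
    · have hzx : c ≠ a := fun h => hxz h.symm
      have step : M a c = M b c := hM a b hab c hzx (fun h => hbz h.symm)
      cases hq0 : q.length with
      | zero =>
        exact absurd (SimpleGraph.Walk.eq_of_length_eq_zero hq0) hbz
      | succ m =>
        have hgv : (SimpleGraph.Walk.cons hab q).getVert ((SimpleGraph.Walk.cons hab q).length - 1)
            = q.getVert (q.length - 1) := by
          simp [SimpleGraph.Walk.length_cons, hq0]
        rw [hgv, step, ih hq hbz]

lemma walk_entry_eq' {n : ℕ} {K : Type*} [Field K]
    {T : SimpleGraph (Fin n)} (M M' : Matrix (Fin n) (Fin n) K)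
    (hdiag : ∀ i, M i i = M' i i)
    (hedge : ∀ u v, T.Adj u v → M u v = M' u v)
    (hM : ∀ u v, T.Adj u v → ∀ w, w ≠ u → w ≠ v → M u w = M v w)
    (hM' : ∀ u v, T.Adj u v → ∀ w, w ≠ u → w ≠ v → M' u w = M' v w) :
    ∀ {x z : Fin n} (p : T.Walk x z), p.IsPath → M x z = M' x z := by
  intro x z p
  induction p with
  | nil => intro _; exact hdiag _
  | @cons a b c hab q ih =>
    intro hp
    rw [SimpleGraph.Walk.cons_isPath_iff] at hp
    obtain ⟨hq, hns⟩ := hp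
    by_cases hbz : b = c
    · subst hbz; exact hedge _ _ hab
    · have hza : c ≠ a := by
        rintro rfl
        exact hns (SimpleGraph.Walk.end_mem_support q)
      rw [hM a b hab c hza (fun h => hbz h.symm),
          hM' a b hab c hza (fun h => hbz h.symm), ih hq]

/-- Uniqueness of the matrix associated to a tree: a matrix `M` with prescribed
diagonal entries and prescribed entries on the (directed) edges of a tree `T`,
satisfying the row-agreement condition `M u w = M v w` for every edge `(u,v)` and
every `w ∉ {u,v}`, is uniquely determined; moreover each off-tree entry `M x z`
equals the entry at the last edge of the unique path from `x` to `z` (i.e. `M y z`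
where `y` is the penultimate vertex of that path). -/
theorem tree_matrix_unique {n : ℕ} {K : Type*} [Field K]
    (T : SimpleGraph (Fin n)) (hT : T.IsTree)
    (M M' : Matrix (Fin n) (Fin n) K)
    (hdiag : ∀ i, M i i = M' i i)
    (hedge : ∀ u v, T.Adj u v → M u v = M' u v)
    (hM : ∀ u v, T.Adj u v → ∀ w, w ≠ u → w ≠ v → M u w = M v w)
    (hM' : ∀ u v, T.Adj u v → ∀ w, w ≠ u → w ≠ v → M' u w = M' v w) :
    M = M' ∧
    ∀ (x z : Fin n) (p : T.Walk x z), p.IsPath → x ≠ z →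
      M x z = M (p.getVert (p.length - 1)) z := by
  constructor
  · ext x z
    obtain ⟨w⟩ := hT.isConnected x z
    exact walk_entry_eq' M M' hdiag hedge hM hM' w.toPath.val w.toPath.prop
  · intro x z p hp hxz
    exact walk_entry_eq M hM p hp hxz
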